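/- Let L > 0, α > 0, k ∈ ℤ, and set h = L/(k + 1/2). Then there exists a unique γ > 0 such that e^{γh} = α coth(γL), and for every n ∈ ℤ the complex numbers λ_n = γ + (i/L)(k + 1/2)(4n+1)π satisfy e^{λ_n h} = -α tanh(λ_n L). In particular the delay characteristic equation e^{λh} = -α tanh(λL) has infinitely many roots with real part γ > 0. -/

import Mathlib

set_option maxHeartbeats 1000000 in
/-- Delay-induced instability: with `h = L/(k+1/2)` there is a unique `γ > 0` with
`e^{γh} = α coth(γL)`, and for every `n ∈ ℤ` the (pairwise distinct) complex numbers
`λ_n = γ + (i/L)(k+1/2)(4n+1)π` satisfy `e^{λ_n h} = -α tanh(λ_n L)`; in particular the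
delay characteristic equation has infinitely many roots with real part `γ > 0`. -/
theorem stmt_16 (L α : ℝ) (hL : 0 < L) (hα : 0 < α) (k : ℤ) (hk : 0 ≤ k)
    (h : ℝ) (hh : h = L / ((k:ℝ) + 1/2)) :
    (∃! γ : ℝ, 0 < γ ∧
      Real.exp (γ * h) = α * (Real.cosh (γ*L) / Real.sinh (γ*L))) ∧
    ∀ γ : ℝ, 0 < γ →
      Real.exp (γ * h) = α * (Real.cosh (γ*L) / Real.sinh (γ*L)) →
      ∀ lamn : ℤ → ℂ,
        (∀ n : ℤ, lamn n =
          (γ:ℂ) + Complex.I / (L:ℂ) * ((k:ℂ) + 1/2) * (4*(n:ℂ)+1) * (Real.pi:ℂ)) →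
        (∀ n : ℤ, (lamn n).re = γ ∧
          Complex.exp (lamn n * (h:ℂ)) = -(α:ℂ) * Complex.tanh (lamn n * (L:ℂ))) ∧
        Function.Injective lamn := by
  have hkR : (0:ℝ) ≤ (k:ℝ) := by exact_mod_cast hk
  have hK : (0:ℝ) < (k:ℝ) + 1/2 := by linarith
  have hh0 : 0 < h := by rw [hh]; positivity
  -- the "product form" is equivalent to the stated form for positive γ
  have prod_form : ∀ γ : ℝ, 0 < γ →
      (Real.exp (γ * h) = α * (Real.cosh (γ*L) / Real.sinh (γ*L)) ↔
       Real.exp (γ * h) * Real.sinh (γ*L) = α * Real.cosh (γ*L)) := by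
    intro γ hγ
    have hs : 0 < Real.sinh (γ*L) := Real.sinh_pos_iff.2 (by positivity)
    rw [← mul_div_assoc, eq_div_iff hs.ne']
  -- monotonicity: no two distinct positive solutions
  have mono : ∀ a b : ℝ, 0 < a → a < b →
      Real.exp (a*h) * Real.sinh (a*L) = α * Real.cosh (a*L) →
      Real.exp (b*h) * Real.sinh (b*L) = α * Real.cosh (b*L) → False := by
    intro a b ha hab hea heb
    have hb : 0 < b := lt_trans ha hab
    have hsa : 0 < Real.sinh (a*L) := Real.sinh_pos_iff.2 (by positivity)
    have hsb : 0 < Real.sinh (b*L) := Real.sinh_pos_iff.2 (by positivity)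
    have hex : Real.exp (a*h) < Real.exp (b*h) := by
      apply Real.exp_lt_exp.2; nlinarith
    have hdiff : 0 < Real.sinh (b*L - a*L) := Real.sinh_pos_iff.2 (by nlinarith)
    rw [Real.sinh_sub] at hdiff
    have h1 : Real.exp (a*h) * (Real.sinh (a*L) * Real.sinh (b*L)) =
        α * (Real.cosh (a*L) * Real.sinh (b*L)) := by
      linear_combination Real.sinh (b*L) * hea
    have h2 : Real.exp (b*h) * (Real.sinh (a*L) * Real.sinh (b*L)) =
        α * (Real.cosh (b*L) * Real.sinh (a*L)) := by
      linear_combination Real.sinh (a*L) * heb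
    nlinarith [mul_pos hsa hsb, mul_lt_mul_of_pos_right hex (mul_pos hsa hsb)]
  constructor
  · -- existence and uniqueness of γ
    set F : ℝ → ℝ := fun γ => Real.exp (γ*h) * Real.sinh (γ*L) - α * Real.cosh (γ*L) with hF
    have hFcont : Continuous F := by fun_prop
    set M : ℝ := max (Real.log (α+1) / h) (Real.arsinh (α+1) / L) with hM
    have hM0 : 0 ≤ M :=
      le_trans (div_nonneg (Real.log_nonneg (by linarith)) hh0.le) (le_max_left _ _)
    have hMe : α + 1 ≤ Real.exp (M*h) := by
      calc α + 1 = Real.exp (Real.log (α+1)) := (Real.exp_log (by linarith)).symm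
        _ ≤ Real.exp (M*h) := by
            apply Real.exp_le_exp.2
            rw [← div_le_iff₀ hh0] at *
            exact le_max_left _ _ |>.trans (le_of_eq rfl)
    have hMs : α + 1 ≤ Real.sinh (M*L) := by
      calc α + 1 = Real.sinh (Real.arsinh (α+1)) := (Real.sinh_arsinh _).symm
        _ ≤ Real.sinh (M*L) := by
            apply Real.sinh_le_sinh.2
            rw [← div_le_iff₀ hL]
            exact le_max_right _ _
    have hMc : Real.cosh (M*L) ≤ Real.sinh (M*L) + 1 := by
      have h1 : Real.cosh (M*L) - Real.sinh (M*L) = Real.exp (-(M*L)) := by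
        rw [Real.cosh_eq, Real.sinh_eq]; ring
      have h2 : Real.exp (-(M*L)) ≤ 1 := Real.exp_le_one_iff.2 (by nlinarith)
      linarith
    have hFM : 1 ≤ F M := by
      have hs : 0 < Real.sinh (M*L) := by linarith
      simp only [hF]
      nlinarith [mul_le_mul hMe hMs (by linarith) (by positivity : (0:ℝ) ≤ Real.exp (M*h))]
    have hF0 : F 0 = -α := by simp [hF]
    have h0mem : (0:ℝ) ∈ Set.Icc (F 0) (F M) := by
      rw [hF0]; constructor <;> linarith
    obtain ⟨γ, hγmem, hγ0⟩ := intermediate_value_Icc hM0 hFcont.continuousOn h0mem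
    have hγpos : 0 < γ := by
      rcases lt_or_eq_of_le hγmem.1 with h' | h'
      · exact h'
      · exfalso; rw [← h', hF0] at hγ0; linarith
    have hγeq : Real.exp (γ*h) * Real.sinh (γ*L) = α * Real.cosh (γ*L) := by
      have := hγ0; simp only [hF] at this; linarith
    refine ⟨γ, ⟨hγpos, (prod_form γ hγpos).2 hγeq⟩, ?_⟩
    intro y ⟨hy0, hyeq⟩
    have hyeq' := (prod_form y hy0).1 hyeq
    rcases lt_trichotomy y γ with h' | h' | h'
    · exact absurd (mono y γ hy0 h' hyeq' hγeq) not_false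
    · exact h'
    · exact absurd (mono γ y hγpos h' hγeq hyeq') not_false
  · -- the family of complex roots
    intro γ hγ heq lamn hlam
    have heq' := (prod_form γ hγ).1 heq
    have hsγ : 0 < Real.sinh (γ*L) := Real.sinh_pos_iff.2 (by positivity)
    have hLc : (L:ℂ) ≠ 0 := by exact_mod_cast hL.ne'
    have hKc : ((k:ℂ) + 1/2) ≠ 0 := by
      have : (((k:ℝ) + 1/2 : ℝ) : ℂ) ≠ 0 := by exact_mod_cast hK.ne'
      push_cast at this; exact this
    have hπc : (Real.pi:ℂ) ≠ 0 := by exact_mod_cast Real.pi_ne_zero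
    constructor
    · intro n
      have hre : lamn n = (γ:ℂ) +
          ((((k:ℝ)+1/2)*(4*(n:ℝ)+1)*Real.pi/L : ℝ) : ℂ) * Complex.I := by
        rw [hlam n]; push_cast; field_simp
      constructor
      · rw [hre]; simp
      · -- exponent identity
        set m : ℤ := 4*n*k + 2*n + k with hm
        have h1 : lamn n * (h:ℂ) =
            ((γ*h : ℝ):ℂ) + ((2*n : ℤ):ℂ) * (2 * (Real.pi:ℂ) * Complex.I)
              + (Real.pi:ℂ) * Complex.I := by
          have h2k : ((1:ℂ) + (k:ℂ)*2) ≠ 0 := by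
            intro h0; apply hKc; linear_combination h0/2
          have h4 : ((1:ℂ)+(k:ℂ)*2)*((1:ℂ)+(k:ℂ)*2)⁻¹ = 1 := mul_inv_cancel₀ h2k
          rw [hlam n, hh]; push_cast; field_simp
          linear_combination Complex.I*(Real.pi:ℂ)*(4*(n:ℂ)+1)*h4
        have e1 : Complex.exp (lamn n * (h:ℂ)) = -((Real.exp (γ*h) : ℝ):ℂ) := by
          rw [h1, Complex.exp_add, Complex.exp_add,
            Complex.exp_int_mul_two_pi_mul_I, Complex.exp_pi_mul_I,
            Complex.ofReal_exp]
          ring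
        have h2 : lamn n * (L:ℂ) =
            ((γ*L : ℝ):ℂ) + ((m:ℂ) * (Real.pi:ℂ) + (Real.pi:ℂ)/2) * Complex.I := by
          rw [hlam n]; push_cast [hm]; field_simp; ring
        have hsin0 : Complex.sin ((m:ℂ) * (Real.pi:ℂ)) = 0 := Complex.sin_int_mul_pi m
        set c : ℂ := Complex.cos ((m:ℂ) * (Real.pi:ℂ)) with hc
        have hc2 : c^2 = 1 := by
          have := Complex.sin_sq_add_cos_sq ((m:ℂ) * (Real.pi:ℂ))
          rw [hsin0] at this; simpa [hc] using this
        have hcne : c ≠ 0 := by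
          intro h0; rw [h0] at hc2; simp at hc2
        have hcosb : Complex.cos ((m:ℂ) * (Real.pi:ℂ) + (Real.pi:ℂ)/2) = 0 := by
          rw [Complex.cos_add_pi_div_two, hsin0, neg_zero]
        have hsinb : Complex.sin ((m:ℂ) * (Real.pi:ℂ) + (Real.pi:ℂ)/2) = c :=
          Complex.sin_add_pi_div_two _
        have hs : Complex.sinh (lamn n * (L:ℂ)) = ((Real.cosh (γ*L) : ℝ):ℂ) * (c * Complex.I) := by
          rw [h2, Complex.sinh_add, Complex.cosh_mul_I, Complex.sinh_mul_I,
            hcosb, hsinb, Complex.ofReal_cosh]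
          ring
        have hcsh : Complex.cosh (lamn n * (L:ℂ)) = ((Real.sinh (γ*L) : ℝ):ℂ) * (c * Complex.I) := by
          rw [h2, Complex.cosh_add, Complex.cosh_mul_I, Complex.sinh_mul_I,
            hcosb, hsinb, Complex.ofReal_sinh]
          ring
        have hsne : ((Real.sinh (γ*L) : ℝ):ℂ) ≠ 0 := by exact_mod_cast hsγ.ne'
        have htanh : Complex.tanh (lamn n * (L:ℂ)) =
            ((Real.cosh (γ*L) : ℝ):ℂ) / ((Real.sinh (γ*L) : ℝ):ℂ) := by
          rw [Complex.tanh_eq_sinh_div_cosh, hs, hcsh,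
            mul_div_mul_right _ _ (mul_ne_zero hcne Complex.I_ne_zero)]
        rw [e1, htanh, heq]
        push_cast
        ring
    · -- injectivity
      intro a b hab
      rw [hlam a, hlam b] at hab
      have h4 : (4*(a:ℂ)+1) = (4*(b:ℂ)+1) := by
        have hab' : Complex.I / (L:ℂ) * ((k:ℂ) + 1/2) * (4*(a:ℂ)+1) * (Real.pi:ℂ)
            = Complex.I / (L:ℂ) * ((k:ℂ) + 1/2) * (4*(b:ℂ)+1) * (Real.pi:ℂ) :=
          add_left_cancel hab
        have hne : Complex.I / (L:ℂ) * ((k:ℂ) + 1/2) ≠ 0 :=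
          mul_ne_zero (div_ne_zero Complex.I_ne_zero hLc) hKc
        have h5 := mul_right_cancel₀ hπc hab'
        rw [mul_assoc, mul_assoc] at h5
        have h6 := mul_left_cancel₀ (div_ne_zero Complex.I_ne_zero hLc) h5
        exact mul_left_cancel₀ hKc h6
      have : (a:ℂ) = b := by linear_combination h4 / 4
      exact_mod_cast this
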